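/- Let (X,F) be a symmetric n-ary band that is reducible to an associative binary operation G : X² → X (i.e., F = G^{n−1}). Then: (a) for every x ∈ X the map ℓ_x is an endomorphism of (X,G), i.e., ℓ_x(G(y,z)) = G(ℓ_x(y), ℓ_x(z)) for all y, z ∈ X; (b) ℓ_{G(x,y)} = ℓ_x ∘ ℓ_y = ℓ_{B(x,y)} for all x, y ∈ X; (c) σ is a congruence for G (if x₁ σ y₁ and x₂ σ y₂ then G(x₁,x₂) σ G(y₁,y₂)) and G(x,y) σ B(x,y) for all x, y ∈ X, so the operations induced by G and by B on X/σ coincide. -/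

import Mathlib

namespace NaryBand

variable {X : Type*}

/-- Replace the window of length `n` starting at position `i` (0-based) of the
`(2*n-1)`-tuple `x` by the value of `F` on that window. -/
def contract {n : ℕ} (F : (Fin n → X) → X) (i : ℕ) (hn : 2 ≤ n) (hi : i ≤ n - 1)
    (x : Fin (2 * n - 1) → X) : Fin n → X :=
  fun j =>
    if _h1 : (j : ℕ) < i then x ⟨(j : ℕ), by have := j.isLt; omega⟩
    else if _h2 : (j : ℕ) = i then
      F (fun k => x ⟨i + (k : ℕ), by have := k.isLt; omega⟩)
    else x ⟨(j : ℕ) + n - 1, by have := j.isLt; omega⟩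

/-- `F` is an associative `n`-ary operation. -/
def NAssoc {n : ℕ} (hn : 2 ≤ n) (F : (Fin n → X) → X) : Prop :=
  ∀ (i : ℕ) (hi : i + 1 ≤ n - 1) (x : Fin (2 * n - 1) → X),
    F (contract F i hn (by omega) x) = F (contract F (i + 1) hn (by omega) x)

/-- `F` is a symmetric `n`-ary operation. -/
def NSym {n : ℕ} (F : (Fin n → X) → X) : Prop :=
  ∀ (σ : Equiv.Perm (Fin n)) (x : Fin n → X), F (x ∘ σ) = F x

/-- `F` is an idempotent `n`-ary operation. -/
def NIdem {n : ℕ} (F : (Fin n → X) → X) : Prop :=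
  ∀ x : X, F (fun _ => x) = x

/-- The associated binary operation `B(x,y) = F(x,…,x,y)` (with `n-1` copies of `x`). -/
def assocB {n : ℕ} (F : (Fin n → X) → X) (x y : X) : X :=
  F (fun j => if (j : ℕ) < n - 1 then x else y)

/-- The map `ℓ_x : y ↦ B(x,y)`. -/
def ell {n : ℕ} (F : (Fin n → X) → X) (x : X) : X → X :=
  fun y => assocB F x y

/-- The `n`-ary extension `G^{n-1}(x₁,…,xₙ) = G(x₁, G(x₂, …, G(x_{n-1}, xₙ)…))`
of a binary operation `G`. -/
def nExt {n : ℕ} (hn : 1 ≤ n) (G : X → X → X) (x : Fin n → X) : X :=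
  (List.ofFn (fun i : Fin (n - 1) => x ⟨(i : ℕ), by have := i.isLt; omega⟩)).foldr G
    (x ⟨n - 1, by omega⟩)

/-- The relation `σ`: `x σ y` iff `B(x,y) = y` and `B(y,x) = x`. -/
def sigmaRel {n : ℕ} (F : (Fin n → X) → X) (x y : X) : Prop :=
  assocB F x y = y ∧ assocB F y x = x

/-- `(A, mul)` is an abelian group with identity `e` and inversion `inv`. -/
def IsAbelianGroup {A : Type*} (mul : A → A → A) (e : A) (inv : A → A) : Prop :=
  (∀ a b c, mul (mul a b) c = mul a (mul b c)) ∧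
  (∀ a b, mul a b = mul b a) ∧
  (∀ a, mul e a = a) ∧
  (∀ a, mul (inv a) a = e)

/-- `k`-fold product `a * ⋯ * a` with respect to `mul` (with `powMul mul e 0 a = e`). -/
def powMul {A : Type*} (mul : A → A → A) (e : A) : ℕ → A → A
  | 0, _ => e
  | k + 1, a => mul a (powMul mul e k a)

end NaryBand

open NaryBand

namespace Stmt18Aux

variable {X : Type*} {n : ℕ}

lemma gfold (G : X → X → X) (hG : ∀ a b c : X, G (G a b) c = G a (G b c)) :
    ∀ (l : List X) (w v : X), G (l.foldr G w) v = l.foldr G (G w v) := by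
  intro l
  induction l with
  | nil => intro w v; rfl
  | cons a t ih =>
    intro w v
    simp only [List.foldr_cons]
    rw [hG, ih]

def vecL (n : ℕ) (l : List X) (w : X) : Fin n → X := fun i => l.getD i w

lemma fexp (hn : 2 ≤ n) (F : (Fin n → X) → X) (G : X → X → X)
    (hred : F = nExt (Nat.one_le_of_lt hn) G)
    (l : List X) (hl : l.length = n - 1) (w : X) :
    F (vecL n l w) = l.foldr G w := by
  subst hred
  unfold nExt
  have h1 : (List.ofFn fun i : Fin (n-1) =>
      vecL n l w ⟨(i:ℕ), by have := i.isLt; omega⟩) = l := by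
    apply List.ext_getElem
    · simp [hl]
    · intro i hi1 hi2
      simp only [List.getElem_ofFn]
      show l.getD i w = l[i]
      exact List.getD_eq_getElem l w hi2
  rw [h1]
  congr 1
  show l.getD (n-1) w = w
  exact List.getD_eq_default l w (by omega)

lemma swapcore (hn : 2 ≤ n) (F : (Fin n → X) → X) (G : X → X → X)
    (hS : NSym F) (hred : F = nExt (Nat.one_le_of_lt hn) G)
    (c d : List X) (a b w : X) (h : (c ++ a :: b :: d).length = n - 1) :
    (c ++ a :: b :: d).foldr G w = (c ++ b :: a :: d).foldr G w := by
  have hlen : c.length + d.length + 2 = n - 1 := by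
    have h0 := h; simp at h0; omega
  have h' : (c ++ b :: a :: d).length = n - 1 := by simp; omega
  have hlt1 : c.length < n := by omega
  have hlt2 : c.length + 1 < n := by omega
  set i : Fin n := ⟨c.length, hlt1⟩ with hi
  set j : Fin n := ⟨c.length + 1, hlt2⟩ with hj
  rw [← fexp hn F G hred _ h w, ← fexp hn F G hred _ h' w]
  have e1 : (c ++ a :: b :: d).getD c.length w = a := by
    rw [List.getD_append_right _ _ _ _ le_rfl]
    simp
  have e2 : (c ++ a :: b :: d).getD (c.length + 1) w = b := by
    rw [List.getD_append_right _ _ _ _ (by omega)]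
    simp [Nat.add_sub_cancel_left]
  have e3 : (c ++ b :: a :: d).getD c.length w = b := by
    rw [List.getD_append_right _ _ _ _ le_rfl]
    simp
  have e4 : (c ++ b :: a :: d).getD (c.length + 1) w = a := by
    rw [List.getD_append_right _ _ _ _ (by omega)]
    simp [Nat.add_sub_cancel_left]
  have key : ∀ t : ℕ, t ≠ c.length → t ≠ c.length + 1 →
      (c ++ a :: b :: d).getD t w = (c ++ b :: a :: d).getD t w := by
    intro t h1 h2
    rcases lt_or_ge t c.length with ht | ht
    · rw [List.getD_append _ _ _ _ ht, List.getD_append _ _ _ _ ht]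
    · rw [List.getD_append_right _ _ _ _ ht, List.getD_append_right _ _ _ _ ht]
      obtain ⟨u, hu⟩ : ∃ u, t - c.length = u + 2 := ⟨t - c.length - 2, by omega⟩
      rw [hu]
      simp [List.getD_cons_succ]
  have hvec : vecL n (c ++ a :: b :: d) w
      = (vecL n (c ++ b :: a :: d) w) ∘ (Equiv.swap i j) := by
    funext k
    simp only [Function.comp_apply, Equiv.swap_apply_def]
    by_cases hk1 : k = i
    · rw [if_pos hk1, hk1]
      show (c ++ a :: b :: d).getD (i : ℕ) w = (c ++ b :: a :: d).getD (j : ℕ) w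
      rw [show ((i : Fin n) : ℕ) = c.length from rfl,
        show ((j : Fin n) : ℕ) = c.length + 1 from rfl, e1, e4]
    · rw [if_neg hk1]
      by_cases hk2 : k = j
      · rw [if_pos hk2, hk2]
        show (c ++ a :: b :: d).getD (j : ℕ) w = (c ++ b :: a :: d).getD (i : ℕ) w
        rw [show ((i : Fin n) : ℕ) = c.length from rfl,
          show ((j : Fin n) : ℕ) = c.length + 1 from rfl, e2, e3]
      · rw [if_neg hk2]
        exact key k (fun hc => hk1 (Fin.ext hc)) (fun hc => hk2 (Fin.ext hc))
  rw [hvec, hS]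

variable {X : Type*} {n : ℕ}

def Step (l l' : List X) : Prop :=
  ∃ p s a b, l = p ++ a :: b :: s ∧ l' = p ++ b :: a :: s

lemma step_cons (a : X) {l l' : List X} (h : Step l l') : Step (a :: l) (a :: l') := by
  obtain ⟨p, s, x, y, h1, h2⟩ := h
  exact ⟨a :: p, s, x, y, by simp [h1], by simp [h2]⟩

lemma step_len {l l' : List X} (h : Step l l') : l.length = l'.length := by
  obtain ⟨p, s, x, y, h1, h2⟩ := h
  simp [h1, h2]

lemma connect {l l' : List X} (h : l.Perm l') : Relation.ReflTransGen Step l l' := by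
  induction h with
  | nil => exact .refl
  | cons a _ ih => exact ih.lift (fun l => a :: l) (fun _ _ hs => step_cons a hs)
  | swap x y l => exact Relation.ReflTransGen.single ⟨[], l, y, x, rfl, rfl⟩
  | trans _ _ ih1 ih2 => exact ih1.trans ih2


lemma swapat (hn3 : 3 ≤ n) (F : (Fin n → X) → X) (G : X → X → X)
    (hS : NSym F) (hred : F = nExt (show 1 ≤ n by omega) G)
    (p s : List X) (a b z : X)
    (hlen : n ≤ p.length + s.length + 3) :
    (p ++ a :: b :: s).foldr G z = (p ++ b :: a :: s).foldr G z := by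
  have hn : 2 ≤ n := by omega
  set k := min s.length (n - 3) with hk
  have hk1 : k ≤ s.length := min_le_left _ _
  have hk2 : k ≤ n - 3 := min_le_right _ _
  have hk3 : k = s.length ∨ k = n - 3 := min_choice _ _
  set j := n - 3 - k with hj
  have hjp : j ≤ p.length := by omega
  set p₁ := p.take (p.length - j) with hp₁
  set c := p.drop (p.length - j) with hcdef
  set d := s.take k with hddef
  set s₂ := s.drop k with hs₂
  have hc : c.length = j := by
    rw [hcdef, List.length_drop]; omega
  have hd : d.length = k := by
    rw [hddef, List.length_take]; omega
  have hps : p₁ ++ c = p := List.take_append_drop _ _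
  have hds : d ++ s₂ = s := List.take_append_drop _ _
  have e1 : p ++ a :: b :: s = p₁ ++ ((c ++ a :: b :: d) ++ s₂) := by
    rw [← hps, ← hds]
    simp only [List.append_assoc, List.cons_append]
  have e2 : p ++ b :: a :: s = p₁ ++ ((c ++ b :: a :: d) ++ s₂) := by
    rw [← hps, ← hds]
    simp only [List.append_assoc, List.cons_append]
  rw [e1, e2]
  simp only [List.foldr_append]
  congr 1
  have hwin : (c ++ a :: b :: d).length = n - 1 := by simp [hc, hd]; omega
  have := swapcore hn F G hS hred c d a b (s₂.foldr G z) hwin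
  simpa only [List.foldr_append] using this

lemma gcomm2 (hn2 : n = 2) (F : (Fin n → X) → X) (G : X → X → X)
    (hS : NSym F) (hred : F = nExt (show 1 ≤ n by omega) G)
    (hn : 2 ≤ n) :
    ∀ a b : X, G a b = G b a := by
  intro a b
  have h1 : F (vecL n [a] b) = G a b := by
    rw [fexp hn F G hred [a] (by simp; omega) b]; rfl
  have h2 : F (vecL n [b] a) = G b a := by
    rw [fexp hn F G hred [b] (by simp; omega) a]; rfl
  rw [← h1, ← h2]
  have hlt0 : 0 < n := by omega
  have hlt1 : 1 < n := by omega
  have hvec : vecL n [a] b = vecL n [b] a ∘ Equiv.swap ⟨0, hlt0⟩ ⟨1, hlt1⟩ := by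
    funext kk
    obtain ⟨kv, hkv⟩ := kk
    have hkv2 : kv = 0 ∨ kv = 1 := by omega
    rcases hkv2 with h | h <;> subst h <;>
      simp [vecL, Equiv.swap_apply_def, Fin.ext_iff]
  rw [hvec, hS]

lemma master (hn : 2 ≤ n) (F : (Fin n → X) → X) (G : X → X → X)
    (hG : ∀ a b c : X, G (G a b) c = G a (G b c))
    (hS : NSym F) (hred : F = nExt (Nat.one_le_of_lt hn) G)
    {l l' : List X} (h : l.Perm l') (hlen : n ≤ l.length + 1) (z : X) :
    l.foldr G z = l'.foldr G z := by
  rcases eq_or_lt_of_le hn with h2 | h3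
  · have hcomm := gcomm2 h2.symm F G hS hred hn
    clear hlen
    induction h with
    | nil => rfl
    | cons a _ ih => simp only [List.foldr_cons]; rw [ih]
    | swap x y l =>
      show G y (G x _) = G x (G y _)
      rw [← hG, hcomm y x, hG]
    | trans _ _ ih1 ih2 => rw [ih1, ih2]
  · have h3' : 3 ≤ n := h3
    have key : ∀ l₂ : List X, Relation.ReflTransGen Step l l₂ →
        l.length = l₂.length ∧ l.foldr G z = l₂.foldr G z := by
      intro l₂ hl₂
      induction hl₂ with
      | refl => exact ⟨rfl, rfl⟩
      | tail _ hbc ih =>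
        obtain ⟨hlen', heq⟩ := ih
        obtain ⟨p, s, x, y, hb, hc⟩ := hbc
        refine ⟨by rw [hlen', hb, hc]; simp, ?_⟩
        rw [heq, hb, hc]
        apply swapat h3' F G hS hred
        have hble : l.length = p.length + s.length + 2 := by
          rw [hlen', hb]; simp; omega
        omega
    exact (key l' (connect h)).2

variable (hn : 2 ≤ n) (F : (Fin n → X) → X) (G : X → X → X)
  (hG : ∀ a b c : X, G (G a b) c = G a (G b c))
  (hS : NSym F) (hI : NIdem F)
  (hred : F = nExt (Nat.one_le_of_lt hn) G)

include hn hred in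
lemma assocB_eq (x y : X) :
    assocB F x y = (List.replicate (n-1) x).foldr G y := by
  rw [← fexp hn F G hred _ (by simp) y]
  unfold assocB
  congr 1
  funext j
  unfold vecL
  by_cases hj : (j : ℕ) < n - 1
  · rw [if_pos hj, List.getD_eq_getElem _ _ (by simpa using hj), List.getElem_replicate]
  · rw [if_neg hj, List.getD_eq_default _ _ (by simp; omega)]

include hn hI hred in
lemma idemP (x : X) : (List.replicate (n-1) x).foldr G x = x := by
  rw [← fexp hn F G hred _ (by simp) x]
  have hv : vecL n (List.replicate (n-1) x) x = fun _ => x := by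
    funext i
    unfold vecL
    by_cases h : (i : ℕ) < n - 1
    · rw [List.getD_eq_getElem _ _ (by simpa using h), List.getElem_replicate]
    · rw [List.getD_eq_default _ _ (by simp; omega)]
  rw [hv]
  exact hI x

include hn hG hI hred in
lemma pow_n (x z : X) : (List.replicate n x).foldr G z = G x z := by
  have h1 : List.replicate n x = List.replicate (n-1) x ++ [x] := by
    rw [← List.replicate_succ']
    congr 1
    omega
  rw [h1, List.foldr_append]
  show (List.replicate (n-1) x).foldr G (G x z) = G x z
  rw [← gfold G hG, idemP hn F G hI hred]

include hn hG hI hred in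
lemma period (x : X) (k : ℕ) (z : X) :
    (List.replicate (n + k) x).foldr G z = (List.replicate (k+1) x).foldr G z := by
  have h1 : List.replicate (n + k) x = List.replicate k x ++ List.replicate n x := by
    rw [List.replicate_append_replicate]
    congr 1
    omega
  rw [h1, List.foldr_append, pow_n hn F G hG hI hred]
  rw [List.replicate_succ' (n := k) (a := x), List.foldr_append]
  rfl

include hn hG hI hred in
lemma sqP (x z : X) :
    (List.replicate (n-1) x).foldr G ((List.replicate (n-1) x).foldr G z)
      = (List.replicate (n-1) x).foldr G z := by
  rw [← List.foldr_append, List.replicate_append_replicate]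
  have h1 : (n-1) + (n-1) = n + (n-2) := by omega
  rw [h1, period hn F G hG hI hred]
  congr 2
  omega

include hn hG hS hred in
lemma commP (x y z : X) :
    (List.replicate (n-1) x).foldr G (G y z)
      = G y ((List.replicate (n-1) x).foldr G z) := by
  have h1 : (List.replicate (n-1) x).foldr G (G y z)
      = ((List.replicate (n-1) x) ++ [y]).foldr G z := by
    rw [List.foldr_append]; rfl
  have h2 : G y ((List.replicate (n-1) x).foldr G z)
      = (y :: List.replicate (n-1) x).foldr G z := rfl
  rw [h1, h2]
  exact master hn F G hG hS hred (List.perm_append_singleton y _)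
    (by simp; omega) z

include hG in
lemma flat1 (x y : X) : ∀ (k : ℕ) (z : X),
    (List.replicate k (G x y)).foldr G z
      = (List.flatten (List.replicate k [x, y])).foldr G z := by
  intro k
  induction k with
  | zero => intro z; rfl
  | succ k ih =>
    intro z
    rw [List.replicate_succ, List.replicate_succ, List.flatten_cons]
    simp only [List.foldr_cons, List.foldr_append]
    rw [hG, ih]
    rfl

lemma flatperm1 (x y : X) : ∀ k : ℕ,
    (List.flatten (List.replicate k [x, y])).Perm
      (List.replicate k x ++ List.replicate k y) := by
  intro k
  induction k with
  | zero => simp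
  | succ k ih =>
    rw [List.replicate_succ, List.flatten_cons]
    refine (ih.append_left [x, y]).trans ?_
    show (x :: y :: (List.replicate k x ++ List.replicate k y)).Perm _
    rw [List.replicate_succ (a := x), List.replicate_succ (a := y)]
    show _root_.List.Perm _ (x :: (List.replicate k x ++ (y :: List.replicate k y)))
    exact (List.perm_middle.symm).cons x

include hn hG hS hred in
lemma bchain (x y z : X) :
    (List.replicate (n-1) (G x y)).foldr G z
      = (List.replicate (n-1) x).foldr G ((List.replicate (n-1) y).foldr G z) := by
  rw [flat1 G hG, ← List.foldr_append]
  apply master hn F G hG hS hred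
  · exact flatperm1 x y (n-1)
  · rw [(flatperm1 x y (n-1)).length_eq]
    simp
    omega

include hG in
lemma flat2 (x y : X) : ∀ (k : ℕ) (z : X),
    (List.replicate k ((List.replicate (n-1) x).foldr G y)).foldr G z
      = (List.flatten (List.replicate k (List.replicate (n-1) x ++ [y]))).foldr G z := by
  intro k
  induction k with
  | zero => intro z; rfl
  | succ k ih =>
    intro z
    rw [List.replicate_succ, List.replicate_succ, List.flatten_cons]
    simp only [List.foldr_cons, List.foldr_append]
    rw [gfold G hG, ih]
    rfl

lemma flatperm2 (x y : X) : ∀ k : ℕ,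
    (List.flatten (List.replicate k (List.replicate (n-1) x ++ [y]))).Perm
      (List.replicate (k * (n-1)) x ++ List.replicate k y) := by
  intro k
  induction k with
  | zero => simp
  | succ k ih =>
    rw [List.replicate_succ, List.flatten_cons]
    refine (ih.append_left _).trans ?_
    have h1 : (k+1) * (n-1) = (n-1) + k * (n-1) := by
      rw [Nat.succ_mul]; omega
    have e : (List.replicate (n-1) x ++ [y]) ++ (List.replicate (k*(n-1)) x ++ List.replicate k y)
        = List.replicate (n-1) x ++ (y :: (List.replicate (k*(n-1)) x ++ List.replicate k y)) := by
      simp [List.append_assoc]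
    rw [e, h1, ← List.replicate_append_replicate, List.replicate_succ (a := y), List.append_assoc]
    exact (List.perm_middle.symm).append_left _

include hn hG hI hred in
lemma powred (x : X) : ∀ (j : ℕ) (w : X),
    (List.replicate (j * (n-1) + (n-1)) x).foldr G w
      = (List.replicate (n-1) x).foldr G w := by
  intro j
  induction j with
  | zero => intro w; simp
  | succ j ih =>
    intro w
    have h1 : (j+1) * (n-1) = j * (n-1) + (n-1) := Nat.succ_mul _ _
    set t := j * (n-1) with ht
    have h2 : (j+1) * (n-1) + (n-1) = n + (t + (n-1) - 1) := by
      rw [h1]; omega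
    rw [h2, period hn F G hG hI hred]
    have h3 : t + (n-1) - 1 + 1 = t + (n-1) := by omega
    rw [h3]
    exact ih w

include hn hG hS hI hred in
lemma b2chain (x y z : X) :
    (List.replicate (n-1) ((List.replicate (n-1) x).foldr G y)).foldr G z
      = (List.replicate (n-1) x).foldr G ((List.replicate (n-1) y).foldr G z) := by
  rw [flat2 G hG]
  have hlen2 : n ≤ (List.flatten (List.replicate (n-1)
      (List.replicate (n-1) x ++ [y]))).length + 1 := by
    rw [(flatperm2 x y (n-1)).length_eq, List.length_append,
      List.length_replicate, List.length_replicate]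
    calc n = (n-1) + 1 := by omega
      _ ≤ (n-1)*(n-1) + ((n-1) + 1) := Nat.le_add_left _ _
      _ = (n-1)*(n-1) + (n-1) + 1 := by rw [Nat.add_assoc]
  have h1 := master hn F G hG hS hred (flatperm2 x y (n-1)) hlen2 z
  rw [h1, List.foldr_append]
  have e1 : (n-2) + 1 = n - 1 := by omega
  have h2 : (n-1) * (n-1) = (n-2) * (n-1) + (n-1) := by
    rw [← e1, Nat.succ_mul]
  rw [h2, powred hn F G hG hI hred]

end Stmt18Aux

open Stmt18Aux


/-- If a symmetric `n`-ary band `(X,F)` is reducible to an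
associative binary operation `G` (i.e. `F = G^{n-1}`), then: (a) every `ℓ_x` is an
endomorphism of `(X,G)`; (b) `ℓ_{G(x,y)} = ℓ_x ∘ ℓ_y = ℓ_{B(x,y)}`; (c) `σ` is a
congruence for `G` and `G(x,y) σ B(x,y)`, so `G` and `B` induce the same operation
on `X/σ`. -/
theorem stmt_18 {X : Type*} {n : ℕ} (hn : 2 ≤ n) (F : (Fin n → X) → X)
    (hA : NAssoc hn F) (hS : NSym F) (hI : NIdem F)
    (G : X → X → X) (hG : ∀ a b c : X, G (G a b) c = G a (G b c))
    (hred : F = nExt (show 1 ≤ n by omega) G) :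
    (∀ x y z : X, ell F x (G y z) = G (ell F x y) (ell F x z)) ∧
    (∀ x y : X, ell F (G x y) = ell F x ∘ ell F y ∧
      ell F (G x y) = ell F (assocB F x y)) ∧
    ((∀ x₁ y₁ x₂ y₂ : X, sigmaRel F x₁ y₁ → sigmaRel F x₂ y₂ →
        sigmaRel F (G x₁ x₂) (G y₁ y₂)) ∧
      ∀ x y : X, sigmaRel F (G x y) (assocB F x y)) := by
  have hB : ∀ x y : X, assocB F x y = (List.replicate (n-1) x).foldr G y :=
    assocB_eq hn F G hred
  have hell : ∀ x y : X, ell F x y = (List.replicate (n-1) x).foldr G y := hB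
  refine ⟨?_, ?_, ?_, ?_⟩
  · -- (a)
    intro x y z
    rw [hell, hell, hell, gfold G hG, ← commP hn F G hG hS hred x y z,
      sqP hn F G hG hI hred]
  · -- (b)
    intro x y
    constructor
    · funext z
      simp only [Function.comp_apply]
      rw [hell, hell, hell, bchain hn F G hG hS hred]
    · funext z
      rw [hell, hell, hB, bchain hn F G hG hS hred, b2chain hn F G hG hS hI hred]
  · -- (c) congruence
    intro x₁ y₁ x₂ y₂ h1 h2
    obtain ⟨h1a, h1b⟩ := h1
    obtain ⟨h2a, h2b⟩ := h2
    rw [hB] at h1a h1b h2a h2b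
    constructor
    · show assocB F (G x₁ x₂) (G y₁ y₂) = G y₁ y₂
      rw [hB, bchain hn F G hG hS hred, commP hn F G hG hS hred x₂ y₁ y₂, h2a,
        ← gfold G hG, h1a]
    · show assocB F (G y₁ y₂) (G x₁ x₂) = G x₁ x₂
      rw [hB, bchain hn F G hG hS hred, commP hn F G hG hS hred y₂ x₁ x₂, h2b,
        ← gfold G hG, h1b]
  · -- (c) G(x,y) σ B(x,y)
    intro x y
    constructor
    · show assocB F (G x y) (assocB F x y) = assocB F x y
      rw [hB, hB, bchain hn F G hG hS hred]
      have e : (List.replicate (n-1) y).foldr G ((List.replicate (n-1) x).foldr G y)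
          = (List.replicate (n-1) x).foldr G ((List.replicate (n-1) y).foldr G y) := by
        rw [← List.foldr_append, ← List.foldr_append]
        exact master hn F G hG hS hred List.perm_append_comm (by simp; omega) y
      rw [e, idemP hn F G hI hred y, sqP hn F G hG hI hred]
    · show assocB F (assocB F x y) (G x y) = G x y
      rw [hB, hB, b2chain hn F G hG hS hI hred, commP hn F G hG hS hred y x y,
        idemP hn F G hI hred y]
      have e2 : (List.replicate (n-1) x).foldr G (G x y)
          = (List.replicate n x).foldr G y := by
        have h1 : List.replicate n x = List.replicate (n-1) x ++ [x] := by
          rw [← List.replicate_succ']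
          congr 1
          omega
        rw [h1, List.foldr_append]
        rfl
      rw [e2, pow_n hn F G hG hI hred]
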